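/- Let g : ℝ → ℝ be differentiable on a neighborhood of z and twice differentiable at z, with |g(z)| ≤ X, |g'(z)| ≤ Y, and |g''(z)| ≤ Z, let d_1,…,d_D ∈ ℝ with |d_k| ≤ R for all k, let α_1,…,α_D ∈ ℝ with |α_k| ≤ α for all k, and let γ ≥ 0, with X, Y, Z, R, α ≥ 0. Then the composed KAF output F(t) = Σ_{k=1}^D α_k · exp(−γ (g(t) − d_k)²) is twice differentiable at z and |F''(z)| ≤ 2·D·α·γ·[ (1 + 2γ(X + R)²)·Y² + (X + R)·Z ]. -/

import Mathlib

/-- **Second derivative bound for a KAF composed with a scalar pre-activation.**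
If `g` is differentiable on a neighborhood of `z` and twice differentiable at
`z`, with `|g(z)| ≤ X`, `|g'(z)| ≤ Y`, `|g''(z)| ≤ Z`, dictionary elements
`|d_k| ≤ R` and mixing coefficients `|α_k| ≤ α`, then
`F(t) = Σ_k α_k exp(−γ(g(t)−d_k)²)` is twice differentiable at `z` with
`|F''(z)| ≤ 2Dαγ[(1 + 2γ(X+R)²)Y² + (X+R)Z]`. -/
theorem kaf_comp_second_deriv_bound (D : ℕ) (g : ℝ → ℝ) (z γ X Y Z R α : ℝ)
    (d αc : Fin D → ℝ)
    (hγ : 0 ≤ γ) (hX : 0 ≤ X) (hY : 0 ≤ Y) (hZ : 0 ≤ Z) (hR : 0 ≤ R) (hα : 0 ≤ α)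
    (hg : ∀ᶠ t in nhds z, DifferentiableAt ℝ g t)
    (hg2 : DifferentiableAt ℝ (deriv g) z)
    (hgz : |g z| ≤ X) (hg' : |deriv g z| ≤ Y) (hg'' : |deriv (deriv g) z| ≤ Z)
    (hd : ∀ k, |d k| ≤ R) (hαc : ∀ k, |αc k| ≤ α) :
    (∀ᶠ t in nhds z, DifferentiableAt ℝ
        (fun t => ∑ k : Fin D, αc k * Real.exp (-γ * (g t - d k) ^ 2)) t) ∧
      DifferentiableAt ℝ
        (deriv (fun t => ∑ k : Fin D, αc k * Real.exp (-γ * (g t - d k) ^ 2))) z ∧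
      |deriv (deriv (fun t => ∑ k : Fin D, αc k * Real.exp (-γ * (g t - d k) ^ 2))) z| ≤
        2 * D * α * γ * ((1 + 2 * γ * (X + R) ^ 2) * Y ^ 2 + (X + R) * Z) := by
  set F : ℝ → ℝ := fun t => ∑ k : Fin D, αc k * Real.exp (-γ * (g t - d k) ^ 2) with hF
  set F' : ℝ → ℝ := fun t => ∑ k : Fin D,
      αc k * (Real.exp (-γ * (g t - d k) ^ 2) * (-γ * (2 * ((g t - d k) * deriv g t)))) with hF'
  have hdiffF : ∀ t, DifferentiableAt ℝ g t → HasDerivAt F (F' t) t := by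
    intro t ht
    apply HasDerivAt.fun_sum
    intro k _
    have h1 : HasDerivAt (fun t => (g t - d k) ^ 2) (2 * (g t - d k) * deriv g t) t := by
      have := (ht.hasDerivAt.sub_const (d k)).fun_pow 2
      refine this.congr_deriv ?_
      all_goals push_cast; ring
    have h2 := ((h1.const_mul (-γ)).exp).const_mul (αc k)
    refine h2.congr_deriv ?_
    all_goals ring
  have part1 : ∀ᶠ t in nhds z, DifferentiableAt ℝ F t :=
    hg.mono fun t ht => (hdiffF t ht).differentiableAt
  have hderivEq : deriv F =ᶠ[nhds z] F' := hg.mono fun t ht => (hdiffF t ht).deriv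
  have hgz0 : DifferentiableAt ℝ g z := hg.self_of_nhds
  set c : Fin D → ℝ := fun k => g z - d k with hc
  set G1 : ℝ := deriv g z with hG1
  set G2 : ℝ := deriv (deriv g) z with hG2
  set S : Fin D → ℝ := fun k =>
    αc k * ((Real.exp (-γ * c k ^ 2) * (-γ * (2 * (c k * G1)))) * (-γ * (2 * (c k * G1))) +
      Real.exp (-γ * c k ^ 2) * (-γ * (2 * (G1 * G1 + c k * G2)))) with hS
  have hF'' : HasDerivAt F' (∑ k : Fin D, S k) z := by
    apply HasDerivAt.fun_sum
    intro k _
    have h1 : HasDerivAt (fun t => (g t - d k) ^ 2) (2 * (c k * G1)) z := by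
      have := (hgz0.hasDerivAt.sub_const (d k)).fun_pow 2
      refine this.congr_deriv ?_
      all_goals push_cast; ring
    have hE : HasDerivAt (fun t => Real.exp (-γ * (g t - d k) ^ 2))
        (Real.exp (-γ * c k ^ 2) * (-γ * (2 * (c k * G1)))) z := by
      have := (h1.const_mul (-γ)).exp
      convert this using 1
      all_goals ring
    have hV : HasDerivAt (fun t => -γ * (2 * ((g t - d k) * deriv g t)))
        (-γ * (2 * (G1 * G1 + c k * G2))) z := by
      have := (((hgz0.hasDerivAt.sub_const (d k)).fun_mul hg2.hasDerivAt).const_mul 2).const_mul (-γ)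
      convert this using 1
      all_goals ring
    have := (hE.fun_mul hV).const_mul (αc k)
    convert this using 1
    all_goals (simp only [hS, hc]; ring)
  have hd2 : deriv (deriv F) z = ∑ k : Fin D, S k := by
    rw [hderivEq.deriv_eq]; exact hF''.deriv
  refine ⟨part1, ?_, ?_⟩
  · exact (hderivEq.differentiableAt_iff).mpr hF''.differentiableAt
  · rw [hd2]
    have hXR : (0:ℝ) ≤ X + R := by linarith
    have hbound : ∀ k : Fin D, |S k| ≤
        2 * α * γ * ((1 + 2 * γ * (X + R) ^ 2) * Y ^ 2 + (X + R) * Z) := by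
      intro k
      have hck : |c k| ≤ X + R := by
        calc |c k| ≤ |g z| + |d k| := abs_sub (g z) (d k)
        _ ≤ X + R := add_le_add hgz (hd k)
      have hE1 : Real.exp (-γ * c k ^ 2) ≤ 1 := by
        apply Real.exp_le_one_iff.mpr
        nlinarith [sq_nonneg (c k)]
      have hE0 : (0:ℝ) < Real.exp (-γ * c k ^ 2) := Real.exp_pos _
      have hu : |(-γ * (2 * (c k * G1)))| ≤ 2 * γ * ((X + R) * Y) := by
        have h1 : |(-γ * (2 * (c k * G1)))| = γ * (2 * (|c k| * |G1|)) := by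
          rw [abs_mul, abs_mul, abs_mul, abs_neg, abs_of_nonneg hγ, abs_two]
        rw [h1]
        have h2 : |c k| * |G1| ≤ (X + R) * Y :=
          mul_le_mul hck hg' (abs_nonneg _) hXR
        nlinarith
      have hv : |(-γ * (2 * (G1 * G1 + c k * G2)))| ≤ 2 * γ * (Y ^ 2 + (X + R) * Z) := by
        have h1 : |G1 * G1 + c k * G2| ≤ Y ^ 2 + (X + R) * Z := by
          calc |G1 * G1 + c k * G2| ≤ |G1 * G1| + |c k * G2| := abs_add_le _ _
          _ = |G1| * |G1| + |c k| * |G2| := by rw [abs_mul, abs_mul]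
          _ ≤ Y * Y + (X + R) * Z := add_le_add
              (mul_le_mul hg' hg' (abs_nonneg _) hY)
              (mul_le_mul hck hg'' (abs_nonneg _) hXR)
          _ = Y ^ 2 + (X + R) * Z := by ring
        calc |(-γ * (2 * (G1 * G1 + c k * G2)))| = γ * (2 * |G1 * G1 + c k * G2|) := by
              rw [abs_mul, abs_mul, abs_neg, abs_of_nonneg hγ, abs_two]
        _ ≤ γ * (2 * (Y ^ 2 + (X + R) * Z)) := by nlinarith
        _ = 2 * γ * (Y ^ 2 + (X + R) * Z) := by ring
      have hmain : |(Real.exp (-γ * c k ^ 2) * (-γ * (2 * (c k * G1)))) * (-γ * (2 * (c k * G1))) +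
          Real.exp (-γ * c k ^ 2) * (-γ * (2 * (G1 * G1 + c k * G2)))| ≤
          (2 * γ * ((X + R) * Y)) * (2 * γ * ((X + R) * Y)) + 2 * γ * (Y ^ 2 + (X + R) * Z) := by
        calc |(Real.exp (-γ * c k ^ 2) * (-γ * (2 * (c k * G1)))) * (-γ * (2 * (c k * G1))) +
            Real.exp (-γ * c k ^ 2) * (-γ * (2 * (G1 * G1 + c k * G2)))|
            ≤ |(Real.exp (-γ * c k ^ 2) * (-γ * (2 * (c k * G1)))) * (-γ * (2 * (c k * G1)))| +
              |Real.exp (-γ * c k ^ 2) * (-γ * (2 * (G1 * G1 + c k * G2)))| := abs_add_le _ _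
        _ = Real.exp (-γ * c k ^ 2) * (|(-γ * (2 * (c k * G1)))| * |(-γ * (2 * (c k * G1)))|) +
            Real.exp (-γ * c k ^ 2) * |(-γ * (2 * (G1 * G1 + c k * G2)))| := by
              simp only [abs_mul, abs_of_pos hE0]; ring
        _ ≤ 1 * ((2 * γ * ((X + R) * Y)) * (2 * γ * ((X + R) * Y))) +
            1 * (2 * γ * (Y ^ 2 + (X + R) * Z)) := add_le_add
              (mul_le_mul hE1 (mul_le_mul hu hu (abs_nonneg _) (by positivity))
                (by positivity) one_pos.le)
              (mul_le_mul hE1 hv (abs_nonneg _) one_pos.le)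
        _ = (2 * γ * ((X + R) * Y)) * (2 * γ * ((X + R) * Y)) + 2 * γ * (Y ^ 2 + (X + R) * Z) := by
              ring
      have heq : (2 * γ * ((X + R) * Y)) * (2 * γ * ((X + R) * Y)) + 2 * γ * (Y ^ 2 + (X + R) * Z)
          = 2 * γ * ((1 + 2 * γ * (X + R) ^ 2) * Y ^ 2 + (X + R) * Z) := by ring
      calc |S k| = |αc k| * |(Real.exp (-γ * c k ^ 2) * (-γ * (2 * (c k * G1)))) * (-γ * (2 * (c k * G1))) +
            Real.exp (-γ * c k ^ 2) * (-γ * (2 * (G1 * G1 + c k * G2)))| := by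
              rw [hS]; exact abs_mul _ _
        _ ≤ α * (2 * γ * ((1 + 2 * γ * (X + R) ^ 2) * Y ^ 2 + (X + R) * Z)) := by
              rw [← heq]
              exact mul_le_mul (hαc k) hmain (abs_nonneg _) hα
        _ = 2 * α * γ * ((1 + 2 * γ * (X + R) ^ 2) * Y ^ 2 + (X + R) * Z) := by ring
    calc |∑ k : Fin D, S k| ≤ ∑ k : Fin D, |S k| := Finset.abs_sum_le_sum_abs _ _
      _ ≤ ∑ _k : Fin D, 2 * α * γ * ((1 + 2 * γ * (X + R) ^ 2) * Y ^ 2 + (X + R) * Z) :=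
          Finset.sum_le_sum fun k _ => hbound k
      _ = D * (2 * α * γ * ((1 + 2 * γ * (X + R) ^ 2) * Y ^ 2 + (X + R) * Z)) := by
          simp [Finset.sum_const, Finset.card_univ]
      _ = 2 * D * α * γ * ((1 + 2 * γ * (X + R) ^ 2) * Y ^ 2 + (X + R) * Z) := by ring
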